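/- For every natural number ℓ with ℓ = 5 or (ℓ ≥ 7 and ℓ ≠ 12), there exists a level-ℓ junior ghost datum on the theta graph. (Hence for all such levels ℓ the locus of noncanonical singularities of the moduli space of level-ℓ curves has a component of codimension 3.) -/
import Mathlib


/-- The operation `a ⊙ m := a * m / gcd(m, ℓ)` (exact division since `gcd(m, ℓ) ∣ m`). -/
def odot (ℓ a m : ℕ) : ℕ := a * m / Nat.gcd m ℓ

/-- A level-`ℓ` junior ghost datum on the theta graph (two vertices joined by three
edges, edges 1 and 3 oriented from the first vertex to the second, edge 2 opposite). -/
def IsJuniorGhostDatum (ℓ m₁ m₂ m₃ a₁ a₂ a₃ : ℕ) : Prop :=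
  m₁ < ℓ ∧ m₂ < ℓ ∧ m₃ < ℓ ∧
  1 ≤ a₁ ∧ a₁ < ℓ ∧ 1 ≤ a₂ ∧ a₂ < ℓ ∧ 1 ≤ a₃ ∧ a₃ < ℓ ∧
  m₂ ≡ m₁ + m₃ [MOD ℓ] ∧
  Nat.gcd m₁ ℓ ∣ a₁ ∧ Nat.gcd m₂ ℓ ∣ a₂ ∧ Nat.gcd m₃ ℓ ∣ a₃ ∧
  odot ℓ a₁ m₁ ≡ odot ℓ a₃ m₃ [MOD ℓ] ∧
  odot ℓ a₁ m₁ + odot ℓ a₂ m₂ ≡ 0 [MOD ℓ] ∧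
  a₁ + a₂ + a₃ < ℓ

/-- `odot` scales: `odot (d*ℓ) (d*a) (d*m) = d * odot ℓ a m`. -/
lemma odot_scale (ℓ a m d : ℕ) (hd : 0 < d) :
    odot (d * ℓ) (d * a) (d * m) = d * odot ℓ a m := by
  unfold odot
  rw [Nat.gcd_mul_left]
  by_cases hg : Nat.gcd m ℓ = 0
  · have hm : m = 0 := Nat.eq_zero_of_gcd_eq_zero_left hg
    subst hm; simp
  · have hdvd : Nat.gcd m ℓ ∣ a * m := Dvd.dvd.mul_left (Nat.gcd_dvd_left m ℓ) a
    have h1 : d * a * (d * m) = d * (d * (a * m)) := by ring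
    rw [h1, Nat.mul_div_mul_left _ _ hd, Nat.mul_div_assoc d hdvd]

/-- Scaling lemma: a junior ghost datum for level `ℓ` scales to one for `d * ℓ`. -/
lemma scale_datum {ℓ m₁ m₂ m₃ a₁ a₂ a₃ : ℕ} (d : ℕ) (hd : 0 < d)
    (h : IsJuniorGhostDatum ℓ m₁ m₂ m₃ a₁ a₂ a₃) :
    IsJuniorGhostDatum (d * ℓ) (d * m₁) (d * m₂) (d * m₃) (d * a₁) (d * a₂) (d * a₃) := by
  obtain ⟨h1, h2, h3, h4, h5, h6, h7, h8, h9, h10, h11, h12, h13, h14, h15, h16⟩ := h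
  refine ⟨?_, ?_, ?_, ?_, ?_, ?_, ?_, ?_, ?_, ?_, ?_, ?_, ?_, ?_, ?_, ?_⟩
  · exact Nat.mul_lt_mul_of_pos_left h1 hd
  · exact Nat.mul_lt_mul_of_pos_left h2 hd
  · exact Nat.mul_lt_mul_of_pos_left h3 hd
  · exact Nat.one_le_iff_ne_zero.mpr (by positivity)
  · exact Nat.mul_lt_mul_of_pos_left h5 hd
  · exact Nat.one_le_iff_ne_zero.mpr (by positivity)
  · exact Nat.mul_lt_mul_of_pos_left h7 hd
  · exact Nat.one_le_iff_ne_zero.mpr (by positivity)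
  · exact Nat.mul_lt_mul_of_pos_left h9 hd
  · have := Nat.ModEq.mul_left' (c := d) h10
    rwa [Nat.mul_add] at this
  · rw [Nat.gcd_mul_left]; exact Nat.mul_dvd_mul_left d h11
  · rw [Nat.gcd_mul_left]; exact Nat.mul_dvd_mul_left d h12
  · rw [Nat.gcd_mul_left]; exact Nat.mul_dvd_mul_left d h13
  · rw [odot_scale _ _ _ _ hd, odot_scale _ _ _ _ hd]
    exact Nat.ModEq.mul_left' (c := d) h14
  · rw [odot_scale _ _ _ _ hd, odot_scale _ _ _ _ hd]
    have := Nat.ModEq.mul_left' (c := d) h15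
    rwa [Nat.mul_add, Nat.mul_zero] at this
  · calc d * a₁ + d * a₂ + d * a₃ = d * (a₁ + a₂ + a₃) := by ring
    _ < d * ℓ := Nat.mul_lt_mul_of_pos_left h16 hd

/-- The odd base case: for odd `ℓ ≥ 5` the datum `(1,2,1,1,(ℓ-1)/2,1)` works. -/
lemma odd_base {ℓ : ℕ} (h5 : 5 ≤ ℓ) (hodd : Odd ℓ) :
    ∃ m₁ m₂ m₃ a₁ a₂ a₃ : ℕ, IsJuniorGhostDatum ℓ m₁ m₂ m₃ a₁ a₂ a₃ := by
  obtain ⟨k, hk⟩ := hodd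
  refine ⟨1, 2, 1, 1, k, 1, ?_⟩
  have hg1 : Nat.gcd 1 ℓ = 1 := Nat.gcd_one_left ℓ
  have hg2 : Nat.gcd 2 ℓ = 1 := by
    have hℓodd : ℓ % 2 = 1 := by omega
    rw [Nat.gcd_rec, hℓodd]; rfl

  have ho1 : odot ℓ 1 1 = 1 := by simp [odot, hg1]
  have ho2 : odot ℓ k 2 = 2 * k := by
    simp [odot, hg2]; ring
  refine ⟨by omega, by omega, by omega, le_refl 1, by omega, by omega, by omega,
    le_refl 1, by omega, ?_, by simp [hg1], by simp [hg2], by simp [hg1], ?_, ?_, by omega⟩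
  · rfl
  · rw [ho1]
  · rw [ho1, ho2]
    show (1 + 2 * k) % ℓ = 0 % ℓ
    have : 1 + 2 * k = ℓ := by omega
    simp [this]

lemma eight_base : IsJuniorGhostDatum 8 1 3 2 2 2 2 := by
  unfold IsJuniorGhostDatum odot Nat.ModEq
  decide

/-- Every valid level is divisible by `8` or by an odd number `≥ 5`. -/
lemma exists_good_divisor (ℓ : ℕ) (h : ℓ = 5 ∨ (7 ≤ ℓ ∧ ℓ ≠ 12)) :
    ∃ d, d ∣ ℓ ∧ ((Odd d ∧ 5 ≤ d) ∨ d = 8) := by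
  have hpos : ℓ ≠ 0 := by omega
  obtain ⟨v, d, hdvd, hodd, heq⟩ :
      ∃ v d : ℕ, d ∣ ℓ ∧ ¬ 2 ∣ d ∧ 2 ^ v * d = ℓ :=
    ⟨ℓ.factorization 2, ℓ / 2 ^ ℓ.factorization 2, Nat.ordCompl_dvd ℓ 2,
      Nat.not_dvd_ordCompl Nat.prime_two hpos, Nat.ordProj_mul_ordCompl_eq_self ℓ 2⟩
  have hdodd : Odd d := Nat.odd_iff.mpr (by omega)
  by_cases hd5 : 5 ≤ d
  · exact ⟨d, hdvd, Or.inl ⟨hdodd, hd5⟩⟩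
  · have hd13 : d = 1 ∨ d = 3 := by
      rcases hdodd with ⟨j, hj⟩; omega
    refine ⟨8, ?_, Or.inr rfl⟩
    have hv3 : 3 ≤ v := by
      by_contra hv3
      have hvle : v ≤ 2 := by omega
      have hpow : 2 ^ v = 1 ∨ 2 ^ v = 2 ∨ 2 ^ v = 4 := by
        interval_cases v <;> simp
      rcases hd13 with rfl | rfl <;> omega
    have h8 : (8 : ℕ) ∣ 2 ^ v := by
      have : (2 : ℕ) ^ 3 ∣ 2 ^ v := Nat.pow_dvd_pow 2 hv3
      simpa using this
    exact h8.trans ⟨d, heq.symm⟩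

theorem exists_junior_ghost_datum (ℓ : ℕ) (h : ℓ = 5 ∨ (7 ≤ ℓ ∧ ℓ ≠ 12)) :
    ∃ m₁ m₂ m₃ a₁ a₂ a₃ : ℕ, IsJuniorGhostDatum ℓ m₁ m₂ m₃ a₁ a₂ a₃ := by
  obtain ⟨d, ⟨c, hc⟩, hcase⟩ := exists_good_divisor ℓ h
  have hcpos : 0 < c := by
    rcases Nat.eq_zero_or_pos c with h0 | h0
    · subst h0; omega
    · exact h0
  have hbase : ∃ m₁ m₂ m₃ a₁ a₂ a₃ : ℕ, IsJuniorGhostDatum d m₁ m₂ m₃ a₁ a₂ a₃ := by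
    rcases hcase with ⟨hodd, hd5⟩ | rfl
    · exact odd_base hd5 hodd
    · exact ⟨1, 3, 2, 2, 2, 2, eight_base⟩
  obtain ⟨m₁, m₂, m₃, a₁, a₂, a₃, hdat⟩ := hbase
  refine ⟨c * m₁, c * m₂, c * m₃, c * a₁, c * a₂, c * a₃, ?_⟩
  have := scale_datum c hcpos hdat
  rwa [show c * d = ℓ by rw [Nat.mul_comm]; omega] at this
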